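/- Let X = [ℕ]^{ℵ₀} and define P ⊆ X × 2^ℕ by P(A, B) iff both A \ B and A ∩ B are infinite. Then P does not admit a Borel E₀-invariant uniformization: there is no Borel function f : X → 2^ℕ such that P(A, f(A)) for all A ∈ X and f(A) = f(A') whenever A E₀ A' (i.e., A and A' have finite symmetric difference). -/

import Mathlib

open Set

/-- The eventual-equality relation `E₀` on Cantor space. -/
def E0 (x y : ℕ → Bool) : Prop := ∀ᶠ n in Filter.atTop, x n = y n

/-- The relation `P(A,B)` : both `A \ B` and `A ∩ B` are infinite. -/
def PRel (A B : ℕ → Bool) : Prop :=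
  {n | A n = true ∧ B n = false}.Infinite ∧ {n | A n = true ∧ B n = true}.Infinite

open MeasureTheory
open scoped MeasurableSpace

noncomputable section GPsetup

open Classical in
/-- characteristic function of a set of naturals -/
noncomputable def toF (C : Set ℕ) : ℕ → Bool := fun n => decide (n ∈ C)

lemma toF_eq_true {C : Set ℕ} {n : ℕ} : toF C n = true ↔ n ∈ C := by
  simp [toF]

lemma trueSet_toF (C : Set ℕ) : {n | toF C n = true} = C := by
  ext n; exact toF_eq_true

/-- `B` lies entirely above the finite set `t`. -/
def Above (t : Finset ℕ) (B : Set ℕ) : Prop := ∀ b ∈ B, ∀ m ∈ t, m < b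

/-- `(t, B)` is a valid Ellentuck condition. -/
def Stem (t : Finset ℕ) (B : Set ℕ) : Prop := B.Infinite ∧ Above t B

/-- the basic Ellentuck set `[t, B]`. -/
def Ell (t : Finset ℕ) (B : Set ℕ) : Set (Set ℕ) :=
  {C | ↑t ⊆ C ∧ C \ ↑t ⊆ B ∧ C.Infinite}

lemma Ell_mono {t : Finset ℕ} {B B' : Set ℕ} (h : B' ⊆ B) : Ell t B' ⊆ Ell t B :=
  fun _C hC => ⟨hC.1, hC.2.1.trans h, hC.2.2⟩

lemma self_mem_Ell {t : Finset ℕ} {B : Set ℕ} (hB : B.Infinite) : ↑t ∪ B ∈ Ell t B :=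
  ⟨subset_union_left, fun x hx => hx.1.resolve_left hx.2, hB.mono subset_union_right⟩

/-- completely Ramsey null -/
def CR0 (S : Set (Set ℕ)) : Prop :=
  ∀ t A, Stem t A → ∃ B, B ⊆ A ∧ B.Infinite ∧ ∀ C ∈ Ell t B, C ∉ S

/-- completely Ramsey -/
def CR (S : Set (Set ℕ)) : Prop :=
  ∀ t A, Stem t A → ∃ B, B ⊆ A ∧ B.Infinite ∧
    ((∀ C ∈ Ell t B, C ∈ S) ∨ (∀ C ∈ Ell t B, C ∉ S))

/-- Ellentuck-open -/
def EllOpen (S : Set (Set ℕ)) : Prop :=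
  ∀ C ∈ S, C.Infinite → ∃ t : Finset ℕ, ↑t ⊆ C ∧
    (∀ n ∈ C, n ∉ t → ∀ m ∈ t, m < n) ∧
    (∀ D, ↑t ⊆ D → D \ ↑t ⊆ C → D.Infinite → D ∈ S)

lemma Stem.mono {t : Finset ℕ} {A B : Set ℕ} (h : Stem t A) (hBA : B ⊆ A)
    (hB : B.Infinite) : Stem t B := ⟨hB, fun b hb => h.2 b (hBA hb)⟩

lemma CR0_mono {S S' : Set (Set ℕ)} (h : S' ⊆ S) (hS : CR0 S) : CR0 S' := by
  intro t A hA
  obtain ⟨B, h1, h2, h3⟩ := hS t A hA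
  exact ⟨B, h1, h2, fun C hC hc => h3 C hC (h hc)⟩

lemma CR0_empty : CR0 ∅ := fun t A hA => ⟨A, subset_rfl, hA.1, fun _ _ h => h⟩

lemma CR0_finiteSets : CR0 {C : Set ℕ | ¬ C.Infinite} :=
  fun _t A hA => ⟨A, subset_rfl, hA.1, fun _C hC h => h hC.2.2⟩



section Fusion

variable {Q : Finset ℕ → Set ℕ → Prop}

/-- shrink repeatedly along a list of stems -/
lemma shrink_list (s : Finset ℕ) (A : Set ℕ)
    (hQ : ∀ t B B', B' ⊆ B → Q t B → Q t B')
    (hshrink : ∀ t B, Stem t B → ↑s ⊆ (↑t : Set ℕ) → ↑t ⊆ ↑s ∪ A → B ⊆ A →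
      ∃ B', B' ⊆ B ∧ B'.Infinite ∧ Q t B') :
    ∀ (L : List (Finset ℕ)), (∀ t ∈ L, ↑s ⊆ (↑t : Set ℕ) ∧ ↑t ⊆ ↑s ∪ A) →
    ∀ B, B ⊆ A → B.Infinite → (∀ t ∈ L, Above t B) →
    ∃ B', B' ⊆ B ∧ B'.Infinite ∧ ∀ t ∈ L, Q t B' := by
  intro L
  induction L with
  | nil => intro _ B hBA hBi _; exact ⟨B, subset_rfl, hBi, by simp⟩
  | cons t L ih =>
    intro hL B hBA hBi hAb
    obtain ⟨B1, hB1, hB1i, hQ1⟩ := hshrink t B ⟨hBi, hAb t (by simp)⟩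
      (hL t (by simp)).1 (hL t (by simp)).2 hBA
    obtain ⟨B2, hB2, hB2i, hQ2⟩ := ih (fun u hu => hL u (by simp [hu])) B1
      (hB1.trans hBA) hB1i
      (fun u hu b hb => hAb u (by simp [hu]) b (hB1 hb))
    refine ⟨B2, hB2.trans hB1, hB2i, ?_⟩
    intro u hu
    rcases List.mem_cons.1 hu with h | h
    · exact hQ u B1 B2 hB2 (h ▸ hQ1)
    · exact hQ2 u h
  
lemma fusion (s : Finset ℕ) (A : Set ℕ) (hA : Stem s A)
    (hQ : ∀ t B B', B' ⊆ B → Q t B → Q t B')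
    (hshrink : ∀ t B, Stem t B → ↑s ⊆ (↑t : Set ℕ) → ↑t ⊆ ↑s ∪ A → B ⊆ A →
      ∃ B', B' ⊆ B ∧ B'.Infinite ∧ Q t B') :
    ∃ D, D ⊆ A ∧ Stem s D ∧ ∀ t : Finset ℕ, ↑s ⊆ (↑t : Set ℕ) → ↑t ⊆ ↑s ∪ D →
      Q t {d ∈ D | ∀ m ∈ t, m < d} := by
  classical
  -- the "good shrink" predicate used at every stage
  -- stage step function
  let Good : Finset ℕ → Set ℕ → Set ℕ → Prop := fun F Ak B' =>
    B' ⊆ Ak ∧ B'.Infinite ∧ ∀ t ∈ (s ∪ F).powerset, ↑s ⊆ (↑t : Set ℕ) → Q t B'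
  let step : Finset ℕ × Set ℕ → Finset ℕ × Set ℕ := fun p =>
    let b := sInf p.2
    let F' := insert b p.1
    if h : ∃ B', Good F' {a ∈ p.2 | b < a} B' then (F', h.choose) else (F', ∅)
  -- initial set
  have h0 : ∃ B', Good ∅ A B' := by
    obtain ⟨B', h1, h2, h3⟩ := shrink_list s A hQ hshrink
      ((s.powerset.filter (fun t => s ⊆ t)).toList)
      (by
        intro t ht
        simp only [Finset.mem_toList, Finset.mem_filter, Finset.mem_powerset] at ht
        exact ⟨Finset.coe_subset.2 ht.2, (Finset.coe_subset.2 ht.1).trans subset_union_left⟩)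
      A subset_rfl hA.1 (fun t ht b hb m hm => by
        simp only [Finset.mem_toList, Finset.mem_filter, Finset.mem_powerset] at ht
        exact hA.2 b hb m (ht.1 hm))
    refine ⟨B', h1, h2, ?_⟩
    intro t ht hst
    simp only [Finset.union_empty, Finset.mem_powerset] at ht
    apply h3
    simp only [Finset.mem_toList, Finset.mem_filter, Finset.mem_powerset]
    exact ⟨ht, by exact_mod_cast hst⟩
  let g : ℕ → Finset ℕ × Set ℕ := fun n => step^[n] (∅, h0.choose)
  let Inv : Finset ℕ × Set ℕ → Prop := fun p =>
    p.2 ⊆ A ∧ p.2.Infinite ∧ (∀ a ∈ p.2, ∀ m ∈ s ∪ p.1, m < a) ∧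
      (∀ t : Finset ℕ, t ⊆ s ∪ p.1 → ↑s ⊆ (↑t : Set ℕ) → Q t p.2) ∧ ↑p.1 ⊆ A
  have stepfact : ∀ p, Inv p → (step p).1 = insert (sInf p.2) p.1 ∧
      (step p).2 ⊆ {a ∈ p.2 | sInf p.2 < a} ∧ Inv (step p) := by
    rintro ⟨F, Ak⟩ ⟨h1, h2, h3, h4, h5⟩
    have hbmem : sInf Ak ∈ Ak := Nat.sInf_mem h2.nonempty
    set b := sInf Ak with hbdef
    have hF'A : (↑(insert b F) : Set ℕ) ⊆ A := by
      intro x hx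
      rcases Finset.mem_insert.1 (by exact_mod_cast hx) with h | h
      · exact h ▸ h1 hbmem
      · exact h5 (by exact_mod_cast h)
    have hBbase : {a ∈ Ak | b < a}.Infinite := by
      have : Ak \ Set.Iic b = {a ∈ Ak | b < a} := by
        ext x; simp [Set.mem_diff, Set.mem_Iic, not_le, Set.mem_sep_iff]
      exact this ▸ h2.diff (Set.finite_Iic b)
    have hex : ∃ B', Good (insert b F) {a ∈ Ak | b < a} B' := by
      obtain ⟨B', hs1, hs2, hs3⟩ := shrink_list s A hQ hshrink
        ((((s ∪ insert b F).powerset).filter (fun t => s ⊆ t)).toList)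
        (by
          intro t ht
          simp only [Finset.mem_toList, Finset.mem_filter, Finset.mem_powerset] at ht
          constructor
          · exact_mod_cast ht.2
          · intro x hx
            rcases Finset.mem_union.1 (ht.1 (by exact_mod_cast hx)) with h | h
            · exact Or.inl (by exact_mod_cast h)
            · exact Or.inr (hF'A (by exact_mod_cast h)))
        {a ∈ Ak | b < a}
        (fun x hx => h1 hx.1) hBbase
        (by
          intro t ht x hx m hm
          simp only [Finset.mem_toList, Finset.mem_filter, Finset.mem_powerset] at ht
          rcases Finset.mem_union.1 (ht.1 hm) with h | h
          · exact h3 x hx.1 m (Finset.mem_union_left _ h)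
          · rcases Finset.mem_insert.1 h with h' | h'
            · exact h' ▸ hx.2
            · exact h3 x hx.1 m (Finset.mem_union_right _ h'))
      refine ⟨B', hs1, hs2, ?_⟩
      intro t ht hst
      apply hs3
      simp only [Finset.mem_toList, Finset.mem_filter, Finset.mem_powerset]
      exact ⟨Finset.mem_powerset.1 ht, by exact_mod_cast hst⟩
    have hstep : step (F, Ak) = (insert b F, hex.choose) := by
      simp only [step]
      exact dif_pos hex
    obtain ⟨hg1, hg2, hg3⟩ := hex.choose_spec
    refine ⟨by rw [hstep], by rw [hstep]; exact hg1, ?_⟩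
    rw [hstep]
    refine ⟨(fun x hx => h1 (hg1 hx).1), hg2, ?_, ?_, hF'A⟩
    · intro a ha m hm
      rcases Finset.mem_union.1 hm with h | h
      · exact h3 a (hg1 ha).1 m (Finset.mem_union_left _ h)
      · rcases Finset.mem_insert.1 h with h' | h'
        · exact h' ▸ (hg1 ha).2
        · exact h3 a (hg1 ha).1 m (Finset.mem_union_right _ h')
    · intro t ht hst
      exact hg3 t (Finset.mem_powerset.2 ht) hst
  have hInv0 : Inv (∅, h0.choose) := by
    obtain ⟨hg1, hg2, hg3⟩ := h0.choose_spec
    refine ⟨hg1, hg2, ?_, ?_, by simp⟩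
    · intro a ha m hm
      rw [Finset.union_empty] at hm
      exact hA.2 a (hg1 ha) m hm
    · intro t ht hst
      exact hg3 t (by simpa using ht) hst
  have hgsucc : ∀ n, g (n+1) = step (g n) := fun n => Function.iterate_succ_apply' step n _
  have hInv : ∀ n, Inv (g n) := by
    intro n; induction n with
    | zero => exact hInv0
    | succ n ih => rw [hgsucc]; exact (stepfact _ ih).2.2
  let bs : ℕ → ℕ := fun n => sInf (g n).2
  have hbmem : ∀ n, bs n ∈ (g n).2 := fun n => Nat.sInf_mem (hInv n).2.1.nonempty
  have hchain : ∀ n, (g (n+1)).2 ⊆ {a ∈ (g n).2 | bs n < a} := by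
    intro n; rw [hgsucc]; exact (stepfact _ (hInv n)).2.1
  have hchain' : ∀ k n, k ≤ n → (g n).2 ⊆ (g k).2 := by
    intro k n hkn
    induction n with
    | zero => rw [Nat.le_zero.1 hkn]
    | succ n ih =>
      rcases Nat.lt_or_ge k (n+1) with h | h
      · exact (fun x hx => ih (Nat.lt_succ_iff.1 h) ((hchain n hx).1))
      · rw [Nat.le_antisymm hkn h]
  have hbs_mono : StrictMono bs := by
    apply strictMono_nat_of_lt_succ
    intro n
    exact (hchain n (hbmem (n+1))).2
  have hFdesc : ∀ n, (g n).1 = Finset.image bs (Finset.range n) := by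
    intro n; induction n with
    | zero => simp [g]
    | succ n ih =>
      rw [hgsucc, (stepfact _ (hInv n)).1, Finset.range_add_one, Finset.image_insert, ih]
  set D : Set ℕ := Set.range bs with hDdef
  have hDA : D ⊆ A := by
    rintro x ⟨n, rfl⟩
    exact (hInv n).1 (hbmem n)
  have hDinf : D.Infinite := Set.infinite_range_of_injective hbs_mono.injective
  have hDab : Above s D := by
    rintro x ⟨n, rfl⟩ m hm
    exact (hInv n).2.2.1 (bs n) (hbmem n) m (Finset.mem_union_left _ hm)
  refine ⟨D, hDA, ⟨hDinf, hDab⟩, ?_⟩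
  intro t hst htD
  -- find the stage k
  have hIfin : (bs ⁻¹' ↑t).Finite := Set.Finite.preimage hbs_mono.injective.injOn t.finite_toSet
  obtain ⟨k, hk1, hk2⟩ : ∃ k, (∀ x ∈ t, x ∈ s ∨ ∃ j < k, bs j = x) ∧
      (∀ j, bs j ∈ ({d ∈ D | ∀ m ∈ t, m < d} : Set ℕ) → k ≤ j) := by
    by_cases hne : (bs ⁻¹' ↑t).Nonempty
    · set j0 := sSup (bs ⁻¹' ↑t) with hj0
      have hj0mem : j0 ∈ bs ⁻¹' ↑t := Nat.sSup_mem hne hIfin.bddAbove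
      refine ⟨j0 + 1, ?_, ?_⟩
      · intro x hx
        rcases htD (by exact_mod_cast hx) with h | h
        · exact Or.inl (by exact_mod_cast h)
        · obtain ⟨j, rfl⟩ := h
          exact Or.inr ⟨j, Nat.lt_succ_of_le (le_csSup hIfin.bddAbove hx), rfl⟩
      · intro j hj
        have : bs j0 < bs j := hj.2 (bs j0) hj0mem
        exact Nat.succ_le_of_lt (hbs_mono.lt_iff_lt.1 this)
    · refine ⟨0, ?_, fun j _ => Nat.zero_le _⟩
      intro x hx
      rcases htD (by exact_mod_cast hx) with h | h
      · exact Or.inl (by exact_mod_cast h)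
      · obtain ⟨j, rfl⟩ := h
        exact absurd ⟨j, hx⟩ hne
  have htail : {d ∈ D | ∀ m ∈ t, m < d} ⊆ (g k).2 := by
    rintro x ⟨⟨j, rfl⟩, hx2⟩
    exact hchain' k j (hk2 j ⟨⟨j, rfl⟩, hx2⟩) (hbmem j)
  have htk : t ⊆ s ∪ (g k).1 := by
    intro x hx
    rcases hk1 x hx with h | ⟨j, hj, rfl⟩
    · exact Finset.mem_union_left _ h
    · refine Finset.mem_union_right _ ?_
      rw [hFdesc k]
      exact Finset.mem_image.2 ⟨j, Finset.mem_range.2 hj, rfl⟩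
  exact hQ t (g k).2 _ htail ((hInv k).2.2.2.1 t htk hst)

end Fusion

section Galvin

variable {U : Set (Set ℕ)}

/-- `X` accepts `t` (into `U`). -/
def AccU (U : Set (Set ℕ)) (t : Finset ℕ) (X : Set ℕ) : Prop := Ell t X ⊆ U

/-- `X` rejects `t`. -/
def RejU (U : Set (Set ℕ)) (t : Finset ℕ) (X : Set ℕ) : Prop :=
  ∀ C, C ⊆ X → C.Infinite → ¬ AccU U t C

lemma AccU.mono {t : Finset ℕ} {X Y : Set ℕ} (h : AccU U t X) (hYX : Y ⊆ X) : AccU U t Y :=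
  fun C hC => h ((Ell_mono hYX) hC)

lemma RejU.mono {t : Finset ℕ} {X Y : Set ℕ} (h : RejU U t X) (hYX : Y ⊆ X) : RejU U t Y :=
  fun C hC => h C (hC.trans hYX)

/-- Galvin's lemma: Ellentuck-open sets are completely Ramsey. -/
lemma EllOpen.cr (hU : EllOpen U) : CR U := by
  intro s A hsA
  -- Fusion 1 : decidedness
  obtain ⟨D1, hD1A, hD1, hdec⟩ := fusion (Q := fun t B => AccU U t B ∨ RejU U t B) s A hsA
    (by
      intro t B B' hB' h
      rcases h with h | h
      · exact Or.inl (h.mono hB')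
      · exact Or.inr (h.mono hB'))
    (by
      intro t B hB _ _ _
      by_cases h : ∃ C, C ⊆ B ∧ C.Infinite ∧ AccU U t C
      · obtain ⟨C, h1, h2, h3⟩ := h
        exact ⟨C, h1, h2, Or.inl h3⟩
      · push_neg at h
        exact ⟨B, subset_rfl, hB.1, Or.inr (fun C hC hCi => h C hC hCi)⟩)
  set TD : Finset ℕ → Set ℕ := fun t => {d ∈ D1 | ∀ m ∈ t, m < d} with hTDdef
  have hTDinf : ∀ t : Finset ℕ, (TD t).Infinite := by
    intro t
    apply Set.Infinite.mono (s := D1 \ Set.Iic (t.sup id))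
    · intro x hx
      exact ⟨hx.1, fun m hm => lt_of_le_of_lt (Finset.le_sup (f := id) hm) (not_le.1 hx.2)⟩
    · exact hD1.1.diff (Set.finite_Iic _)
  have hTDs : TD s = D1 := by
    ext x
    constructor
    · exact fun h => h.1
    · exact fun h => ⟨h, fun m hm => hD1.2 x h m hm⟩
  by_cases hacc : AccU U s D1
  · exact ⟨D1, hD1A, hD1.1, Or.inl (fun C hC => hacc hC)⟩
  have hrej : RejU U s D1 := by
    have h := hdec s (by simpa using hD1.2) (by simp)
    rw [show {d | d ∈ D1 ∧ ∀ m ∈ s, m < d} = D1 from hTDs] at h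
    exact h.resolve_left hacc
  -- finiteness claim
  have claimfin : ∀ t : Finset ℕ, ↑s ⊆ (↑t : Set ℕ) → ↑t ⊆ ↑s ∪ D1 → RejU U t (TD t) →
      {b ∈ TD t | AccU U (insert b t) (TD (insert b t))}.Finite := by
    intro t hst htD1 hrejt
    rw [← Set.not_infinite]
    intro hinf
    set C := {b ∈ TD t | AccU U (insert b t) (TD (insert b t))} with hCdef
    refine hrejt C (fun x hx => hx.1) hinf ?_
    -- C accepts t
    intro E hE
    obtain ⟨hE1, hE2, hE3⟩ := hE
    have hEtne : (E \ ↑t).Nonempty := ((hE3.diff t.finite_toSet).nonempty)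
    set b := sInf (E \ ↑t) with hbdef
    have hbmem : b ∈ E \ ↑t := Nat.sInf_mem hEtne
    have hbC : b ∈ C := hE2 hbmem
    apply hbC.2
    refine ⟨?_, ?_, hE3⟩
    · intro x hx
      rcases Finset.mem_insert.1 (by exact_mod_cast hx) with h | h
      · exact h ▸ hbmem.1
      · exact hE1 (by exact_mod_cast h)
    · intro x hx
      have hxt : x ∉ (↑t : Set ℕ) := fun h =>
        hx.2 (by exact_mod_cast Finset.mem_insert_of_mem (by exact_mod_cast h))
      have hxb : x ≠ b := by
        intro h
        apply hx.2
        rw [h]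
        exact_mod_cast Finset.mem_insert_self b t
      have hxC : x ∈ C := hE2 ⟨hx.1, hxt⟩
      refine ⟨hxC.1.1, ?_⟩
      intro m hm
      rcases Finset.mem_insert.1 hm with h | h
      · have hble : b ≤ x := Nat.sInf_le ⟨hx.1, hxt⟩
        exact h ▸ lt_of_le_of_ne hble (Ne.symm hxb)
      · exact hxC.1.2 m h
  -- Fusion 2 : avoid accepted extensions
  obtain ⟨D2, hD2D1, hD2, hprop2⟩ := fusion
    (Q := fun t B => RejU U t (TD t) → ∀ b ∈ B, ¬ AccU U (insert b t) (TD (insert b t)))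
    s D1 hD1
    (fun t B B' hB' h hr b hb => h hr b (hB' hb))
    (by
      intro t B hB hst htD1 hBD1
      by_cases h : RejU U t (TD t)
      · have hfin := claimfin t hst htD1 h
        refine ⟨B \ {b ∈ TD t | AccU U (insert b t) (TD (insert b t))}, diff_subset,
          hB.1.diff hfin, ?_⟩
        intro _ b hb hAcc
        exact hb.2 ⟨⟨hBD1 hb.1, fun m hm => hB.2 b hb.1 m hm⟩, hAcc⟩
      · exact ⟨B, subset_rfl, hB.1, fun hr => absurd hr h⟩)
  have hD2A : D2 ⊆ A := hD2D1.trans hD1A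
  -- rejection propagates to all stems in D2
  have rejall : ∀ n (t : Finset ℕ), t.card = n → ↑s ⊆ (↑t : Set ℕ) → ↑t ⊆ ↑s ∪ D2 →
      RejU U t (TD t) := by
    intro n
    induction n using Nat.strong_induction_on with
    | _ n ih =>
      intro t hcard hst htD2
      by_cases hts : t ⊆ s
      · have : t = s := Finset.Subset.antisymm hts (by exact_mod_cast hst)
        rw [this, hTDs]
        exact hrej
      · obtain ⟨x, hxt, hxs⟩ := Finset.not_subset.1 hts
        have htne : t.Nonempty := ⟨x, hxt⟩
        set b := t.max' htne with hbdef
        have hbt : b ∈ t := t.max'_mem htne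
        have hbs : b ∉ s := by
          intro hbsmem
          have hxD2 : x ∈ D2 := by
            rcases htD2 (by exact_mod_cast hxt) with h | h
            · exact absurd (by exact_mod_cast h) hxs
            · exact h
          have h1 : b < x := hD2.2 x hxD2 b hbsmem
          have h2 : x ≤ b := t.le_max' x hxt
          omega
        have hbD2 : b ∈ D2 := by
          rcases htD2 (by exact_mod_cast hbt) with h | h
          · exact absurd (by exact_mod_cast h) hbs
          · exact h
        set t0 := t.erase b with ht0def
        have hst0 : ↑s ⊆ (↑t0 : Set ℕ) := by
          intro m hm
          have hmt : m ∈ t := by exact_mod_cast hst hm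
          have : m ∈ (t.erase b : Finset ℕ) :=
            Finset.mem_erase.2 ⟨by rintro rfl; exact hbs (by exact_mod_cast hm), hmt⟩
          exact_mod_cast this
        have ht0D2 : ↑t0 ⊆ ↑s ∪ D2 := fun y hy => htD2 (by
          exact_mod_cast Finset.erase_subset b t (by exact_mod_cast hy))
        have hcard0 : t0.card < n := by
          rw [← hcard, ht0def]
          exact Finset.card_erase_lt_of_mem hbt
        have hrej0 : RejU U t0 (TD t0) := ih t0.card hcard0 t0 rfl hst0 ht0D2
        have hQ2 := hprop2 t0 hst0 ht0D2 hrej0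
        have hbTD2 : b ∈ {d ∈ D2 | ∀ m ∈ t0, m < d} := by
          refine ⟨hbD2, fun m hm => ?_⟩
          have hmt : m ∈ t := Finset.mem_of_mem_erase hm
          have h1 : m ≤ b := t.le_max' m hmt
          have h2 : m ≠ b := (Finset.mem_erase.1 hm).1
          omega
        have hnacc := hQ2 b hbTD2
        rw [Finset.insert_erase hbt] at hnacc
        have hdect := hdec t hst (fun y hy => (htD2 hy).imp_right (fun h => hD2D1 h))
        exact hdect.resolve_left hnacc
  refine ⟨D2, hD2A, hD2.1, Or.inr ?_⟩
  intro C hC hCU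
  obtain ⟨hCs, hCD2, hCinf⟩ := hC
  obtain ⟨t0, ht0C, hlow, hopen⟩ := hU C hCU hCinf
  set t := t0 ∪ s with htdef
  have hst : ↑s ⊆ (↑t : Set ℕ) := by
    intro m hm
    exact_mod_cast Finset.mem_union_right t0 (by exact_mod_cast hm)
  have htD2 : ↑t ⊆ ↑s ∪ D2 := by
    intro y hy
    rcases Finset.mem_union.1 (by exact_mod_cast hy) with h | h
    · rcases (em (y ∈ (↑s : Set ℕ))) with h' | h'
      · exact Or.inl h'
      · exact Or.inr (hCD2 ⟨ht0C h, h'⟩)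
    · exact Or.inl (by exact_mod_cast h)
  have hrejt := rejall t.card t rfl hst htD2
  have hsub : C \ ↑t ⊆ TD t := by
    intro y hy
    have hys : y ∉ (↑s : Set ℕ) := fun h => hy.2 (hst h)
    have hyD2 : y ∈ D2 := hCD2 ⟨hy.1, hys⟩
    refine ⟨hD2D1 hyD2, fun m hm => ?_⟩
    rcases Finset.mem_union.1 hm with h | h
    · exact hlow y hy.1 (fun hyt0 => hy.2 (by
        exact_mod_cast Finset.mem_union_left s hyt0)) m h
    · exact hD2.2 y hyD2 m h
  refine hrejt (C \ ↑t) hsub (hCinf.diff t.finite_toSet) ?_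
  intro E hE
  obtain ⟨hEt, hEdiff, hEinf⟩ := hE
  apply hopen E
  · intro y hy
    exact hEt (by exact_mod_cast Finset.mem_union_left s (by exact_mod_cast hy))
  · intro y hy
    by_cases h : y ∈ (↑t : Set ℕ)
    · rcases Finset.mem_union.1 (by exact_mod_cast h) with h' | h'
      · exact absurd (by exact_mod_cast h') hy.2
      · exact hCs (by exact_mod_cast h')
    · exact (hEdiff ⟨hy.1, h⟩).1
  · exact hEinf

end Galvin
section Ideal

lemma CR0_union {X Y : Set (Set ℕ)} (hX : CR0 X) (hY : CR0 Y) : CR0 (X ∪ Y) := by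
  intro t A hA
  obtain ⟨B1, h1, h2, h3⟩ := hX t A hA
  obtain ⟨B2, h4, h5, h6⟩ := hY t B1 (hA.mono h1 h2)
  refine ⟨B2, h4.trans h1, h5, ?_⟩
  intro C hC h
  rcases h with h | h
  · exact h3 C (Ell_mono h4 hC) h
  · exact h6 C hC h

lemma CR0_iUnion {S : ℕ → Set (Set ℕ)} (hS : ∀ i, CR0 (S i)) : CR0 (⋃ i, S i) := by
  have aux : ∀ (l : List ℕ) (t : Finset ℕ) (B : Set ℕ), Stem t B →
      ∃ B', B' ⊆ B ∧ B'.Infinite ∧ ∀ i ∈ l, ∀ C ∈ Ell t B', C ∉ S i := by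
    intro l
    induction l with
    | nil => exact fun t B hB => ⟨B, subset_rfl, hB.1, by simp⟩
    | cons i l ih =>
      intro t B hB
      obtain ⟨B1, h1, h2, h3⟩ := hS i t B hB
      obtain ⟨B2, h4, h5, h6⟩ := ih t B1 (hB.mono h1 h2)
      refine ⟨B2, h4.trans h1, h5, ?_⟩
      intro j hj C hC
      rcases List.mem_cons.1 hj with h | h
      · exact h ▸ h3 C (Ell_mono h4 hC)
      · exact h6 j h C hC
  intro s A hsA
  obtain ⟨D, hDA, hD, hfus⟩ := fusion
    (Q := fun t B => ∀ i ≤ t.card, ∀ C ∈ Ell t B, C ∉ S i) s A hsA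
    (fun t B B' hB' h i hi C hC => h i hi C (Ell_mono hB' hC))
    (by
      intro t B hB _ _ _
      obtain ⟨B', h1, h2, h3⟩ := aux (List.range (t.card + 1)) t B hB
      exact ⟨B', h1, h2, fun i hi C hC =>
        h3 i (List.mem_range.2 (Nat.lt_succ_of_le hi)) C hC⟩)
  refine ⟨D, hDA, hD.1, ?_⟩
  rintro C hC hCU
  obtain ⟨i, hCi⟩ := Set.mem_iUnion.1 hCU
  obtain ⟨hCs, hCsD, hCinf⟩ := hC
  obtain ⟨F, hFC, hFcard⟩ := hCinf.exists_subset_card_eq i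
  set m := (F ∪ s).sup id with hm
  have htfin : (C ∩ Set.Iic m).Finite := (Set.finite_Iic m).subset inter_subset_right
  set t := htfin.toFinset with ht
  have htco : (↑t : Set ℕ) = C ∩ Set.Iic m := htfin.coe_toFinset
  have hst : ↑s ⊆ (↑t : Set ℕ) := by
    intro x hx
    rw [htco]
    exact ⟨hCs hx, Finset.le_sup (f := id) (Finset.mem_union_right F (by exact_mod_cast hx))⟩
  have htsD : (↑t : Set ℕ) ⊆ ↑s ∪ D := by
    intro x hx
    rw [htco] at hx
    by_cases h : x ∈ (↑s : Set ℕ)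
    · exact Or.inl h
    · exact Or.inr (hCsD ⟨hx.1, h⟩)
  have hFt : F ⊆ t := by
    intro x hx
    have : x ∈ (↑t : Set ℕ) := by
      rw [htco]
      exact ⟨hFC hx, Finset.le_sup (f := id) (Finset.mem_union_left s hx)⟩
    exact_mod_cast this
  have hcard : i ≤ t.card := hFcard ▸ Finset.card_le_card hFt
  refine hfus t hst htsD i hcard C ⟨?_, ?_, hCinf⟩ hCi
  · rw [htco]; exact inter_subset_left
  · intro x hx
    have hxm : m < x := by
      by_contra h
      refine hx.2 ?_
      have : x ∈ (↑t : Set ℕ) := by rw [htco]; exact ⟨hx.1, not_lt.1 h⟩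
      exact_mod_cast this
    have hxs : x ∉ (↑s : Set ℕ) := fun h => hx.2 (hst h)
    refine ⟨hCsD ⟨hx.1, hxs⟩, ?_⟩
    intro m' hm'
    have : m' ≤ m := by
      have h2 : m' ∈ (↑t : Set ℕ) := by exact_mod_cast hm'
      rw [htco] at h2
      exact h2.2
    omega

end Ideal

section Interior

/-- Ellentuck interior. -/
def IntE (S : Set (Set ℕ)) : Set (Set ℕ) :=
  {C | ∃ t : Finset ℕ, ↑t ⊆ C ∧ (∀ n ∈ C, n ∉ t → ∀ m ∈ t, m < n) ∧
    ∀ D, ↑t ⊆ D → D \ ↑t ⊆ C → D.Infinite → D ∈ S}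

lemma EllOpen_IntE (S : Set (Set ℕ)) : EllOpen (IntE S) := by
  rintro C ⟨t, h1, h2, h3⟩ _
  refine ⟨t, h1, h2, ?_⟩
  intro D hD1 hD2 hD3
  refine ⟨t, hD1, ?_, ?_⟩
  · intro n hn hnt m hm
    by_cases h : n ∈ (↑t : Set ℕ)
    · exact absurd (by exact_mod_cast h) hnt
    · exact h2 n (hD2 ⟨hn, h⟩) hnt m hm
  · intro E hE1 hE2 hE3
    refine h3 E hE1 ?_ hE3
    intro x hx
    have := hE2 hx
    by_cases h : x ∈ (↑t : Set ℕ)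
    · exact absurd h hx.2
    · exact hD2 ⟨this, h⟩

lemma IntE_subset {S : Set (Set ℕ)} {C : Set ℕ} (hC : C ∈ IntE S) (hCi : C.Infinite) :
    C ∈ S := by
  obtain ⟨t, h1, _, h3⟩ := hC
  exact h3 C h1 diff_subset hCi

lemma EllOpen_union {U V : Set (Set ℕ)} (hU : EllOpen U) (hV : EllOpen V) :
    EllOpen (U ∪ V) := by
  intro C hC hCi
  rcases hC with h | h
  · obtain ⟨t, h1, h2, h3⟩ := hU C h hCi
    exact ⟨t, h1, h2, fun D hD1 hD2 hD3 => Or.inl (h3 D hD1 hD2 hD3)⟩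
  · obtain ⟨t, h1, h2, h3⟩ := hV C h hCi
    exact ⟨t, h1, h2, fun D hD1 hD2 hD3 => Or.inr (h3 D hD1 hD2 hD3)⟩

lemma EllOpen_iUnion {S : ℕ → Set (Set ℕ)} (hS : ∀ i, EllOpen (S i)) :
    EllOpen (⋃ i, S i) := by
  intro C hC hCi
  obtain ⟨i, hi⟩ := Set.mem_iUnion.1 hC
  obtain ⟨t, h1, h2, h3⟩ := hS i C hi hCi
  exact ⟨t, h1, h2, fun D hD1 hD2 hD3 => Set.mem_iUnion.2 ⟨i, h3 D hD1 hD2 hD3⟩⟩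

lemma EllOpen_empty : EllOpen (∅ : Set (Set ℕ)) := fun _ h => absurd h (Set.notMem_empty _)

/-- boundary of a closed set is completely Ramsey null -/
lemma CR0_boundary {U : Set (Set ℕ)} (hU : EllOpen U) : CR0 (Uᶜ \ IntE Uᶜ) := by
  intro s A hsA
  obtain ⟨B, hBA, hBi, hB⟩ := (EllOpen_union hU (EllOpen_IntE Uᶜ)).cr s A hsA
  refine ⟨B, hBA, hBi, ?_⟩
  rcases hB with h | h
  · intro C hC hX
    rcases h C hC with h' | h'
    · exact hX.1 h'
    · exact hX.2 h'
  · intro C hC hX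
    obtain ⟨hCs, hCsB, hCinf⟩ := hC
    apply hX.2
    refine ⟨s, hCs, ?_, ?_⟩
    · intro n hn hns m hm
      exact (hsA.mono hBA hBi).2 n (hCsB ⟨hn, by exact_mod_cast hns⟩) m hm
    · intro D hD1 hD2 hD3
      intro hDU
      refine h D ⟨hD1, ?_, hD3⟩ (Or.inl hDU)
      intro x hx
      exact hCsB ⟨hD2 hx, hx.2⟩

end Interior
section GClassSec

/-- sets that are Ellentuck-open modulo a completely Ramsey null set -/
def GClass (T : Set (Set ℕ)) : Prop :=
  ∃ U, EllOpen U ∧ CR0 ((T \ U) ∪ (U \ T))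

lemma GClass_open {U : Set (Set ℕ)} (hU : EllOpen U) : GClass U := by
  refine ⟨U, hU, ?_⟩
  have : ((U \ U) ∪ (U \ U)) = (∅ : Set (Set ℕ)) := by simp
  rw [this]
  exact CR0_empty

lemma GClass_empty : GClass (∅ : Set (Set ℕ)) := GClass_open EllOpen_empty

lemma GClass_compl {T : Set (Set ℕ)} (hT : GClass T) : GClass Tᶜ := by
  obtain ⟨U, hU, hM⟩ := hT
  refine ⟨IntE Uᶜ, EllOpen_IntE _, ?_⟩
  apply CR0_mono (S := ((T \ U) ∪ (U \ T)) ∪ ((Uᶜ \ IntE Uᶜ) ∪ {C | ¬ C.Infinite}))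
  · rintro C (⟨hC1, hC2⟩ | ⟨hC1, hC2⟩)
    · by_cases h : C ∈ U
      · exact Or.inl (Or.inr ⟨h, fun h' => hC1 h'⟩)
      · exact Or.inr (Or.inl ⟨h, hC2⟩)
    · by_cases h : C.Infinite
      · have : C ∈ Uᶜ := IntE_subset hC1 h
        exact Or.inl (Or.inl ⟨not_not.1 hC2, this⟩)
      · exact Or.inr (Or.inr h)
  · exact CR0_union hM (CR0_union (CR0_boundary hU) CR0_finiteSets)

lemma GClass_iUnion {T : ℕ → Set (Set ℕ)} (hT : ∀ i, GClass (T i)) :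
    GClass (⋃ i, T i) := by
  choose U hU hM using hT
  refine ⟨⋃ i, U i, EllOpen_iUnion hU, ?_⟩
  apply CR0_mono (S := ⋃ i, ((T i \ U i) ∪ (U i \ T i)))
  · rintro C (⟨hC1, hC2⟩ | ⟨hC1, hC2⟩)
    · obtain ⟨i, hi⟩ := Set.mem_iUnion.1 hC1
      exact Set.mem_iUnion.2 ⟨i, Or.inl ⟨hi, fun h => hC2 (Set.mem_iUnion.2 ⟨i, h⟩)⟩⟩
    · obtain ⟨i, hi⟩ := Set.mem_iUnion.1 hC1
      exact Set.mem_iUnion.2 ⟨i, Or.inr ⟨hi, fun h => hC2 (Set.mem_iUnion.2 ⟨i, h⟩)⟩⟩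
  · exact CR0_iUnion hM

lemma GClass.cr {T : Set (Set ℕ)} (hT : GClass T) : CR T := by
  obtain ⟨U, hU, hM⟩ := hT
  intro s A hsA
  obtain ⟨B1, hB1A, hB1i, hB1⟩ := hM s A hsA
  obtain ⟨B2, hB2B1, hB2i, hB2⟩ := hU.cr s B1 (hsA.mono hB1A hB1i)
  refine ⟨B2, hB2B1.trans hB1A, hB2i, ?_⟩
  rcases hB2 with h | h
  · refine Or.inl ?_
    intro C hC
    by_contra hCT
    exact hB1 C (Ell_mono hB2B1 hC) (Or.inr ⟨h C hC, hCT⟩)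
  · refine Or.inr ?_
    intro C hC hCT
    exact hB1 C (Ell_mono hB2B1 hC) (Or.inl ⟨hCT, h C hC⟩)

lemma EllOpen_memCyl (n : ℕ) : EllOpen {C : Set ℕ | n ∈ C} := by
  intro C hC _
  have htfin : (C ∩ Set.Iic n).Finite := (Set.finite_Iic n).subset inter_subset_right
  refine ⟨htfin.toFinset, ?_, ?_, ?_⟩
  · rw [htfin.coe_toFinset]; exact inter_subset_left
  · intro x hx hxt m hm
    have hmem : m ∈ C ∩ Set.Iic n := by
      have : m ∈ (↑htfin.toFinset : Set ℕ) := by exact_mod_cast hm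
      rwa [htfin.coe_toFinset] at this
    have hxn : n < x := by
      by_contra h
      refine hxt ?_
      have : x ∈ (↑htfin.toFinset : Set ℕ) := by
        rw [htfin.coe_toFinset]; exact ⟨hx, not_lt.1 h⟩
      exact_mod_cast this
    have h2 : m ≤ n := Set.mem_Iic.1 hmem.2
    omega
  · intro D hD1 _ _
    apply hD1
    rw [htfin.coe_toFinset]
    exact ⟨hC, le_refl n⟩

lemma EllOpen_notMemCyl (n : ℕ) : EllOpen {C : Set ℕ | n ∉ C} := by
  intro C hC _
  have htfin : (C ∩ Set.Iic n).Finite := (Set.finite_Iic n).subset inter_subset_right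
  refine ⟨htfin.toFinset, ?_, ?_, ?_⟩
  · rw [htfin.coe_toFinset]; exact inter_subset_left
  · intro x hx hxt m hm
    have hmem : m ∈ C ∩ Set.Iic n := by
      have : m ∈ (↑htfin.toFinset : Set ℕ) := by exact_mod_cast hm
      rwa [htfin.coe_toFinset] at this
    have hxn : n < x := by
      by_contra h
      refine hxt ?_
      have : x ∈ (↑htfin.toFinset : Set ℕ) := by
        rw [htfin.coe_toFinset]; exact ⟨hx, not_lt.1 h⟩
      exact_mod_cast this
    have h2 : m ≤ n := Set.mem_Iic.1 hmem.2
    omega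
  · intro D hD1 hD2 _ hnD
    by_cases h : n ∈ (↑htfin.toFinset : Set ℕ)
    · rw [htfin.coe_toFinset] at h
      exact hC h.1
    · exact hC (hD2 ⟨hnD, h⟩)

end GClassSec

section BorelGP

def Cyl : Set (Set (ℕ → Bool)) := {S | ∃ n b, S = {x | x n = b}}

lemma meas_le_gen : (inferInstance : MeasurableSpace (ℕ → Bool)) ≤
    MeasurableSpace.generateFrom Cyl := by
  rw [show (inferInstance : MeasurableSpace (ℕ → Bool)) = MeasurableSpace.pi from rfl]
  refine iSup_le ?_
  intro n
  intro s hs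
  obtain ⟨u, -, rfl⟩ := hs
  have : (fun x : ℕ → Bool => x n) ⁻¹' u = ⋃ b ∈ u, {x | x n = b} := by
    ext x; simp
  rw [this]
  exact .biUnion u.to_countable
    (fun b _ => MeasurableSpace.measurableSet_generateFrom ⟨n, b, rfl⟩)

lemma meas_GClass {S : Set (ℕ → Bool)} (hS : MeasurableSet S) :
    GClass (toF ⁻¹' S) := by
  have hS' : MeasurableSet[MeasurableSpace.generateFrom Cyl] S :=
    MeasurableSpace.le_def.1 meas_le_gen S hS
  refine MeasurableSpace.generateFrom_induction Cyl
    (p := fun S _ => GClass (toF ⁻¹' S)) ?_ ?_ ?_ ?_ S hS'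
  · rintro t ⟨n, b, rfl⟩ _
    show GClass (toF ⁻¹' {x | x n = b})
    cases b
    · have : toF ⁻¹' {x | x n = false} = {C : Set ℕ | n ∉ C} := by
        ext C; simp [toF]
      rw [this]
      exact GClass_open (EllOpen_notMemCyl n)
    · have : toF ⁻¹' {x | x n = true} = {C : Set ℕ | n ∈ C} := by
        ext C; simp [toF]
      rw [this]
      exact GClass_open (EllOpen_memCyl n)
  · show GClass (toF ⁻¹' ∅)
    rw [Set.preimage_empty]; exact GClass_empty
  · intro t ht ih
    show GClass (toF ⁻¹' tᶜ)
    rw [Set.preimage_compl]; exact GClass_compl ih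
  · intro f hf ih
    show GClass (toF ⁻¹' ⋃ i, f i)
    rw [Set.preimage_iUnion]; exact GClass_iUnion ih

/-- Galvin–Prikry, in the form needed here. -/
theorem galvin_prikry {S : Set (ℕ → Bool)} (hS : MeasurableSet S) (A : Set ℕ)
    (hA : A.Infinite) :
    ∃ B, B ⊆ A ∧ B.Infinite ∧ ∃ e : Bool,
      ∀ C, C ⊆ B → C.Infinite → (toF C ∈ S ↔ e = true) := by
  obtain ⟨B, hBA, hBi, hB⟩ := (meas_GClass hS).cr ∅ A ⟨hA, by simp [Above]⟩
  have hEll : ∀ C : Set ℕ, C ⊆ B → C.Infinite → C ∈ Ell ∅ B := by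
    intro C h1 h2
    exact ⟨by simp, by simpa using h1, h2⟩
  rcases hB with h | h
  · exact ⟨B, hBA, hBi, true, fun C h1 h2 => by simpa using h C (hEll C h1 h2)⟩
  · exact ⟨B, hBA, hBi, false, fun C h1 h2 => by simpa using h C (hEll C h1 h2)⟩

end BorelGP
section Main

lemma nat_infinite_iff {s : Set ℕ} : s.Infinite ↔ ∀ m, ∃ n, m ≤ n ∧ n ∈ s := by
  constructor
  · intro h m
    by_contra hc
    push_neg at hc
    exact h ((Set.finite_Iio m).subset
      (fun n hn => Set.mem_Iio.2 (lt_of_not_ge (fun hle => hc n hle hn))))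
  · intro h hfin
    obtain ⟨b, hb⟩ := hfin.bddAbove
    obtain ⟨n, h1, h2⟩ := h (b + 1)
    have := hb h2
    omega

/-- `P` admits no Borel `E₀`-invariant uniformization on the space
`X = [ℕ]^{ℵ₀}` of infinite subsets of `ℕ`. -/
theorem stmt3 :
    ¬ ∃ f : {A : ℕ → Bool // {n | A n = true}.Infinite} → (ℕ → Bool),
      Measurable f ∧ (∀ A, PRel A.1 (f A)) ∧
        ∀ A A', E0 A.1 A'.1 → f A = f A' := by
  rintro ⟨f, hf, hP, hinv⟩
  have hXmeas : MeasurableSet {x : ℕ → Bool | {n | x n = true}.Infinite} := by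
    have heq : {x : ℕ → Bool | {n | x n = true}.Infinite} =
        ⋂ m, ⋃ n, ⋃ (_ : m ≤ n), {x : ℕ → Bool | x n = true} := by
      ext x
      simp only [Set.mem_setOf_eq, Set.mem_iInter, Set.mem_iUnion]
      rw [nat_infinite_iff]
      exact ⟨fun h m => (h m).imp (fun n hn => ⟨hn.1, hn.2⟩),
        fun h m => (h m).imp (fun n hn => ⟨hn.1, hn.2⟩)⟩
    rw [heq]
    refine MeasurableSet.iInter fun m => MeasurableSet.iUnion fun n =>
      MeasurableSet.iUnion fun _ => ?_
    have : {x : ℕ → Bool | x n = true} = (fun x : ℕ → Bool => x n) ⁻¹' {true} := by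
      ext x; simp
    rw [this]
    exact measurable_pi_apply n (measurableSet_singleton true)
  set S : ℕ → Set (ℕ → Bool) := fun i =>
    Subtype.val '' {A : {A : ℕ → Bool // {n | A n = true}.Infinite} | f A i = true}
    with hSdef
  have hSmeas : ∀ i, MeasurableSet (S i) := by
    intro i
    exact MeasurableSet.subtype_image hXmeas
      ((measurable_pi_apply i).comp hf (measurableSet_singleton true))
  have hmem : ∀ (x : ℕ → Bool) (hx : {n | x n = true}.Infinite) (i : ℕ),
      x ∈ S i ↔ f ⟨x, hx⟩ i = true := by
    intro x hx i
    constructor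
    · rintro ⟨A, hA, rfl⟩
      rw [show (⟨A.1, hx⟩ : {A : ℕ → Bool // {n | A n = true}.Infinite}) = A from
        Subtype.ext rfl]
      exact hA
    · intro h
      exact ⟨⟨x, hx⟩, h, rfl⟩
  have hSinv : ∀ (i : ℕ) x y (hx : {n | x n = true}.Infinite)
      (hy : {n | y n = true}.Infinite), E0 x y → (x ∈ S i ↔ y ∈ S i) := by
    intro i x y hx hy hxy
    rw [hmem x hx i, hmem y hy i, hinv ⟨x, hx⟩ ⟨y, hy⟩ hxy]
  have key : ∀ (i : ℕ) (A : Set ℕ), A.Infinite → ∃ B, B ⊆ A ∧ B.Infinite ∧ ∃ e : Bool,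
      ∀ C, C ⊆ B → C.Infinite → (toF C ∈ S i ↔ e = true) :=
    fun i A hA => galvin_prikry (hSmeas i) A hA
  choose Bf hBf1 hBf2 ef hef using key
  set Aseq : ℕ → {s : Set ℕ // s.Infinite} := fun n => Nat.rec
    ⟨Bf 0 Set.univ Set.infinite_univ, hBf2 0 _ _⟩
    (fun n ih => ⟨Bf (n+1) ih.1 ih.2, hBf2 (n+1) _ _⟩) n with hAseq
  set eps : ℕ → Bool := fun n => match n with
    | 0 => ef 0 Set.univ Set.infinite_univ
    | (n+1) => ef (n+1) (Aseq n).1 (Aseq n).2 with heps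
  have hom : ∀ (n : ℕ) C, C ⊆ (Aseq n).1 → C.Infinite → (toF C ∈ S n ↔ eps n = true) := by
    intro n
    cases n with
    | zero => exact fun C h1 h2 => hef 0 _ _ C h1 h2
    | succ n => exact fun C h1 h2 => hef (n+1) _ _ C h1 h2
  have hdec : ∀ n, (Aseq (n+1)).1 ⊆ (Aseq n).1 := fun n => hBf1 (n+1) _ _
  have hmono : ∀ k n, k ≤ n → (Aseq n).1 ⊆ (Aseq k).1 := by
    intro k n hkn
    induction n with
    | zero => rw [Nat.le_zero.1 hkn]
    | succ n ih =>
      rcases Nat.lt_or_ge k (n+1) with h | h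
      · exact (hdec n).trans (ih (Nat.lt_succ_iff.1 h))
      · rw [Nat.le_antisymm hkn h]
  set aseq : ℕ → ℕ := fun n => Nat.rec (sInf (Aseq 0).1)
    (fun n ih => sInf ((Aseq (n+1)).1 ∩ Set.Ioi ih)) n with haseq
  have haS : ∀ n, aseq (n+1) ∈ (Aseq (n+1)).1 ∩ Set.Ioi (aseq n) := by
    intro n
    apply Nat.sInf_mem
    have heq2 : (Aseq (n+1)).1 \ Set.Iic (aseq n) = (Aseq (n+1)).1 ∩ Set.Ioi (aseq n) := by
      ext x
      simp only [Set.mem_diff, Set.mem_Iic, Set.mem_inter_iff, Set.mem_Ioi, not_le]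
    exact (heq2 ▸ ((Aseq (n+1)).2.diff (Set.finite_Iic _))).nonempty
  have hamem : ∀ n, aseq n ∈ (Aseq n).1 := by
    intro n
    cases n with
    | zero => exact Nat.sInf_mem (Aseq 0).2.nonempty
    | succ n => exact (haS n).1
  have hasm : StrictMono aseq := strictMono_nat_of_lt_succ (fun n => (haS n).2)
  set D : Set ℕ := Set.range aseq with hD
  have hDinf : D.Infinite := Set.infinite_range_of_injective hasm.injective
  have hDhom : ∀ C, C ⊆ D → C.Infinite → ∀ n, (toF C ∈ S n ↔ eps n = true) := by
    intro C hCD hCi n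
    set C' := C \ Set.Iio (aseq n) with hC'
    have hC'A : C' ⊆ (Aseq n).1 := by
      rintro x ⟨hx1, hx2⟩
      obtain ⟨m, rfl⟩ := hCD hx1
      have hnm : n ≤ m := by
        by_contra h
        exact hx2 (Set.mem_Iio.2 (hasm (not_le.1 h)))
      exact hmono n m hnm (hamem m)
    have hC'i : C'.Infinite := hCi.diff (Set.finite_Iio _)
    have h1 : toF C' ∈ S n ↔ eps n = true := hom n C' hC'A hC'i
    have hE : E0 (toF C) (toF C') := by
      refine Filter.eventually_atTop.2 ⟨aseq n, ?_⟩
      intro m hm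
      have hmm : m ∈ C ↔ m ∈ C' := by
        constructor
        · intro h
          exact ⟨h, fun h2 => absurd (Set.mem_Iio.1 h2) (not_lt.2 hm)⟩
        · exact fun h => h.1
      simp [toF, hmm]
    have hCinf' : {n | toF C n = true}.Infinite := by rw [trueSet_toF]; exact hCi
    have hC'inf' : {n | toF C' n = true}.Infinite := by rw [trueSet_toF]; exact hC'i
    rw [hSinv n (toF C) (toF C') hCinf' hC'inf' hE]
    exact h1
  have hfconst : ∀ C (hC : C ⊆ D) (hCi : C.Infinite),
      f ⟨toF C, by rw [trueSet_toF]; exact hCi⟩ = eps := by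
    intro C hC hCi
    funext n
    have h := hDhom C hC hCi n
    rw [hmem (toF C) (by rw [trueSet_toF]; exact hCi) n] at h
    cases hgn : eps n
    · rw [hgn] at h
      cases hb : f ⟨toF C, by rw [trueSet_toF]; exact hCi⟩ n
      · rfl
      · exact absurd (h.1 hb) (by simp)
    · rw [hgn] at h
      exact h.2 rfl
  have hfD := hP ⟨toF D, by rw [trueSet_toF]; exact hDinf⟩
  rw [hfconst D subset_rfl hDinf] at hfD
  set CD := {m ∈ D | eps m = true} with hCDdef
  have hCDinf : CD.Infinite := by
    have h2 := hfD.2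
    have heq3 : {n | toF D n = true ∧ eps n = true} = CD := by
      ext n
      simp only [Set.mem_setOf_eq, toF_eq_true, hCDdef, Set.mem_sep_iff]
    rwa [heq3] at h2
  have hfCD := hP ⟨toF CD, by rw [trueSet_toF]; exact hCDinf⟩
  rw [hfconst CD (fun x hx => hx.1) hCDinf] at hfCD
  have h1 := hfCD.1
  have heq4 : {n | toF CD n = true ∧ eps n = false} = ∅ := by
    ext n
    simp only [Set.mem_setOf_eq, Set.mem_empty_iff_false, iff_false, not_and]
    intro h2
    rw [toF_eq_true] at h2
    rw [h2.2]
    simp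
  rw [heq4] at h1
  exact h1 Set.finite_empty

end Main
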